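/- Let D be a closed convex bounded subset of a real Hilbert space, let g : D → ℝ be convex and Fréchet differentiable with gradient ∇g, and define the curvature constant C_g := sup { (2/η²) ( g(x + η(u − x)) − g(x) − η ⟨∇g(x), u − x⟩ ) : x, u ∈ D, η ∈ (0,1] }. If ∇g is L-Lipschitz on D, i.e., ‖∇g(x) − ∇g(y)‖ ≤ L ‖x − y‖ for all x, y ∈ D, then C_g ≤ diam(D)² L, where diam(D) := sup_{a,b ∈ D} ‖a − b‖. -/

import Mathlib

local notation "⟪" x ", " y "⟫" => @inner ℝ _ _ x y

/-- **Estimate of the curvature constant by the Lipschitz constant of the gradient.**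
Let `D` be a closed convex bounded subset of a real Hilbert space, let `g` be convex on
`D` and Fréchet differentiable with gradient `∇g = g'` at every point of `D`, and assume
`∇g` is `L`-Lipschitz on `D`.  Then every term of the supremum defining the curvature
constant `C_g = sup {(2/η²)(g(x + η(u−x)) − g(x) − η⟪∇g(x), u−x⟫) : x, u ∈ D, η ∈ (0,1]}`
is bounded by `diam(D)² L`, i.e. `C_g ≤ diam(D)² L`. -/
theorem stmt_13 {H : Type*} [NormedAddCommGroup H] [InnerProductSpace ℝ H] [CompleteSpace H]
    (D : Set H) (hDconv : Convex ℝ D) (hDcl : IsClosed D) (hDbdd : Bornology.IsBounded D)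
    (g : H → ℝ) (hg : ConvexOn ℝ D g)
    (g' : H → H) (hdiff : ∀ x ∈ D, HasGradientAt g (g' x) x)
    (L : ℝ) (hLip : ∀ x ∈ D, ∀ y ∈ D, ‖g' x - g' y‖ ≤ L * ‖x - y‖) :
    ∀ x ∈ D, ∀ u ∈ D, ∀ η ∈ Set.Ioc (0 : ℝ) 1,
      (2 / η ^ 2) * (g (x + η • (u - x)) - g x - η * ⟪g' x, u - x⟫) ≤
        Metric.diam D ^ 2 * L := by

  intro x hx u hu η hη
  obtain ⟨hη0, hη1⟩ := hη
  -- distinguish the degenerate case where D is a subsingleton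
  by_cases hsub : ∀ a ∈ D, ∀ b ∈ D, a = b
  · have hux : u = x := hsub u hu x hx
    have hdiam : Metric.diam D = 0 := by
      apply Metric.diam_subsingleton
      intro a ha b hb; exact hsub a ha b hb
    simp [hux, hdiam]
  · -- there are two distinct points, hence L ≥ 0
    push_neg at hsub
    obtain ⟨a, ha, b, hb, hab⟩ := hsub
    have hL : 0 ≤ L := by
      have h1 := hLip a ha b hb
      have h2 : 0 < ‖a - b‖ := by
        rw [norm_pos_iff]; exact sub_ne_zero.mpr hab
      nlinarith [norm_nonneg (g' a - g' b)]
    set v : H := η • (u - x) with hv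
    set y : H := x + v with hy
    have hymem : y ∈ D := by
      have := hDconv.add_smul_sub_mem hx hu ⟨le_of_lt hη0, hη1⟩
      simpa [hy, hv] using this
    have hzmem : ∀ t ∈ Set.Icc (0:ℝ) 1, x + t • (y - x) ∈ D := fun t ht =>
      hDconv.add_smul_sub_mem hx hymem ht
    -- derivative of the composition
    have hderiv : ∀ t ∈ Set.Icc (0:ℝ) 1,
        HasDerivAt (fun s : ℝ => g (x + s • (y - x)))
          ((fun t : ℝ => ⟪g' (x + t • (y - x)), y - x⟫) t) t := by
      intro t ht
      have h1 : HasDerivAt (fun s : ℝ => x + s • (y - x)) (y - x) t := by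
        simpa using ((hasDerivAt_id t).smul_const (y - x)).const_add x
      have h2 := (hdiff _ (hzmem t ht)).hasFDerivAt
      have h3 := h2.comp_hasDerivAt t h1
      simpa [InnerProductSpace.toDual_apply_apply, Function.comp_def] using h3
    -- continuity of the integrand
    have hcont : ContinuousOn (fun t : ℝ => ⟪g' (x + t • (y - x)), y - x⟫)
        (Set.Icc (0:ℝ) 1) := by
      have hlipz : LipschitzOnWith ⟨L * ‖y - x‖, by positivity⟩
          (fun t : ℝ => g' (x + t • (y - x))) (Set.Icc (0:ℝ) 1) := by
        apply LipschitzOnWith.of_dist_le_mul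
        intro s hs t ht
        have hd : (x + s • (y - x)) - (x + t • (y - x)) = (s - t) • (y - x) := by
          module
        have := hLip _ (hzmem s hs) _ (hzmem t ht)
        rw [dist_eq_norm, dist_eq_norm]
        calc ‖g' (x + s • (y - x)) - g' (x + t • (y - x))‖
            ≤ L * ‖(x + s • (y - x)) - (x + t • (y - x))‖ := this
          _ = L * ‖y - x‖ * ‖s - t‖ := by
              rw [hd, norm_smul, Real.norm_eq_abs]; ring
          _ = (⟨L * ‖y - x‖, by positivity⟩ : NNReal) * ‖s - t‖ := by norm_num
      exact (hlipz.continuousOn).inner continuousOn_const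
    have hint : IntervalIntegrable (fun t : ℝ => ⟪g' (x + t • (y - x)), y - x⟫)
        MeasureTheory.volume 0 1 := by
      apply ContinuousOn.intervalIntegrable
      rwa [Set.uIcc_of_le (by norm_num : (0:ℝ) ≤ 1)]
    -- fundamental theorem of calculus
    have hftc : ∫ t in (0:ℝ)..1, ⟪g' (x + t • (y - x)), y - x⟫ = g y - g x := by
      have := intervalIntegral.integral_eq_sub_of_hasDerivAt
        (f := fun s : ℝ => g (x + s • (y - x)))
        (f' := fun t : ℝ => ⟪g' (x + t • (y - x)), y - x⟫)
        (by intro t ht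
            rw [Set.uIcc_of_le (by norm_num : (0:ℝ) ≤ 1)] at ht
            exact hderiv t ht) hint
      simpa using this
    -- pointwise bound on the integrand difference
    have hptwise : ∀ t ∈ Set.Icc (0:ℝ) 1,
        ⟪g' (x + t • (y - x)), y - x⟫ - ⟪g' x, y - x⟫ ≤ L * ‖y - x‖ ^ 2 * t := by
      intro t ht
      have h1 : ⟪g' (x + t • (y - x)), y - x⟫ - ⟪g' x, y - x⟫
          = ⟪g' (x + t • (y - x)) - g' x, y - x⟫ := by
        rw [inner_sub_left]
      rw [h1]
      calc ⟪g' (x + t • (y - x)) - g' x, y - x⟫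
          ≤ ‖g' (x + t • (y - x)) - g' x‖ * ‖y - x‖ := real_inner_le_norm _ _
        _ ≤ (L * ‖(x + t • (y - x)) - x‖) * ‖y - x‖ := by
            have := hLip _ (hzmem t ht) _ hx
            exact mul_le_mul_of_nonneg_right this (norm_nonneg _)
        _ = L * ‖y - x‖ ^ 2 * t := by
            have : (x + t • (y - x)) - x = t • (y - x) := by abel
            rw [this, norm_smul, Real.norm_eq_abs, abs_of_nonneg ht.1]
            ring
    -- key descent inequality
    have key : g y - g x - ⟪g' x, y - x⟫ ≤ L / 2 * ‖y - x‖ ^ 2 := by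
      have hconst : ∫ t in (0:ℝ)..1, (⟪g' x, y - x⟫ : ℝ) = ⟪g' x, y - x⟫ := by
        simp
      have hmono : ∫ t in (0:ℝ)..1,
            (⟪g' (x + t • (y - x)), y - x⟫ - ⟪g' x, y - x⟫)
          ≤ ∫ t in (0:ℝ)..1, L * ‖y - x‖ ^ 2 * t := by
        apply intervalIntegral.integral_mono_on (by norm_num)
        · exact hint.sub intervalIntegrable_const
        · exact (continuous_const.mul continuous_id).intervalIntegrable 0 1
        · exact hptwise
      have hrhs : ∫ t in (0:ℝ)..1, L * ‖y - x‖ ^ 2 * t = L / 2 * ‖y - x‖ ^ 2 := by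
        rw [intervalIntegral.integral_const_mul, integral_id]
        ring
      have hlhs : ∫ t in (0:ℝ)..1,
            (⟪g' (x + t • (y - x)), y - x⟫ - ⟪g' x, y - x⟫)
          = g y - g x - ⟪g' x, y - x⟫ := by
        rw [intervalIntegral.integral_sub hint intervalIntegrable_const, hftc, hconst]
      rw [hlhs, hrhs] at hmono
      exact hmono
    -- put things together
    have hyx : y - x = η • (u - x) := by simp [hy, hv]
    have hinner : ⟪g' x, y - x⟫ = η * ⟪g' x, u - x⟫ := by
      rw [hyx, real_inner_smul_right]
    have hnorm : ‖y - x‖ ^ 2 = η ^ 2 * ‖u - x‖ ^ 2 := by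
      rw [hyx, norm_smul, Real.norm_eq_abs, abs_of_pos hη0, mul_pow]
    have hgy : g (x + η • (u - x)) = g y := by rw [hy, hv]
    have hdist : ‖u - x‖ ≤ Metric.diam D := by
      rw [← dist_eq_norm]; exact Metric.dist_le_diam_of_mem hDbdd hu hx
    have hη2 : (0:ℝ) < η ^ 2 := by positivity
    calc (2 / η ^ 2) * (g (x + η • (u - x)) - g x - η * ⟪g' x, u - x⟫)
        ≤ (2 / η ^ 2) * (L / 2 * ‖y - x‖ ^ 2) := by
          apply mul_le_mul_of_nonneg_left _ (by positivity)
          rw [hgy, ← hinner]; exact key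
      _ = L * ‖u - x‖ ^ 2 := by
          rw [hnorm]; field_simp
      _ ≤ Metric.diam D ^ 2 * L := by
          rw [mul_comm]
          apply mul_le_mul_of_nonneg_right _ hL
          exact pow_le_pow_left₀ (norm_nonneg _) hdist 2
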